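/- In R̃_{2n+1} with the good involution ρ of the previous statement, the key conjugation identity c a c = a⁻¹ holds in G_{2n+1}, where c is the diagonal sign matrix defining ρ (c = diag(ε,−1,…,−1,1,…,1) with −1 in positions 2,…,n+1 and ε = −1 if n odd, ε = +1 if n even). -/

import Mathlib

/-- The signed permutation matrix `a = (1, 2n+1, 2n, …, n+2, −(n+1), …, −3, −2)`
(column `j` is `ε_j e_{σ(j)}`), written with 0-based indices. -/
def Amat (n : ℕ) : Matrix (Fin (2*n+1)) (Fin (2*n+1)) ℤ := fun i j =>
  if (j : ℕ) = 0 then (if (i : ℕ) = 0 then 1 else 0)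
  else if (i : ℕ) = 2*n+1 - (j : ℕ) then (if (j : ℕ) ≤ n then 1 else -1) else 0

/-- The cyclic permutation matrix `b = (2n+1, 1, 2, …, 2n)`, with 0-based indices:
column `j` is `e_{j-1 (mod 2n+1)}`. -/
def Bmat (n : ℕ) : Matrix (Fin (2*n+1)) (Fin (2*n+1)) ℤ := fun i j =>
  if i = j - 1 then 1 else 0

/-- The diagonal sign matrix `c` defining the good involution `ρ`:
`c = diag(ε, −1, …, −1, 1, …, 1)` with `−1` in positions `2,…,n+1` (1-based) and
`ε = −1` if `n` is odd, `ε = +1` if `n` is even. -/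
def Cmat (n : ℕ) : Matrix (Fin (2*n+1)) (Fin (2*n+1)) ℤ := fun i j =>
  if i = j then (if (i : ℕ) ≤ n ∧ (Odd n ∨ (i : ℕ) ≠ 0) then -1 else 1) else 0

lemma key (n : ℕ) (hn : 0 < n) : Cmat n * Amat n * Cmat n * Amat n = 1 := by
  set d : Fin (2*n+1) → ℤ :=
    fun i => if (i : ℕ) ≤ n ∧ (Odd n ∨ (i : ℕ) ≠ 0) then -1 else 1 with hd
  have hC : Cmat n = Matrix.diagonal d := by
    ext i j
    by_cases h : i = j <;> simp [Cmat, Matrix.diagonal_apply, h, hd]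
  rw [hC]
  ext i j
  rw [Matrix.mul_apply]
  simp only [Matrix.mul_diagonal, Matrix.diagonal_mul]
  by_cases hj : (j : ℕ) = 0
  · have hj0 : j = 0 := by ext; simpa using hj
    rw [Finset.sum_eq_single (0 : Fin (2*n+1))]
    · by_cases hi : i = 0
      · subst hi hj0
        by_cases ho : Odd n <;> simp [Amat, hd, Matrix.one_apply, ho]
      · have hi' : (i : ℕ) ≠ 0 := fun h => hi (by ext; simpa using h)
        simp [Amat, hj, hi', Matrix.one_apply, hi, hj0, Ne.symm]
    · intro k _ hk
      have hk' : (k : ℕ) ≠ 0 := fun h => hk (by ext; simpa using h)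
      simp [Amat, hj, hk']
    · simp
  · -- j ≠ 0
    have hjlt : (j : ℕ) < 2*n+1 := j.isLt
    have hjle : (j : ℕ) ≤ 2*n := by omega
    set m : ℕ := 2*n+1 - (j : ℕ) with hm
    have hm1 : 1 ≤ m := by omega
    have hmlt : m < 2*n+1 := by omega
    set k0 : Fin (2*n+1) := ⟨m, hmlt⟩ with hk0
    rw [Finset.sum_eq_single k0]
    · have hAk0j : Amat n k0 j = (if (j : ℕ) ≤ n then 1 else -1) := by
        simp [Amat, hj, hk0]
        intro h; exact absurd hm h
      have hAik0 : Amat n i k0 =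
          (if (i : ℕ) = (j : ℕ) then (if m ≤ n then 1 else -1) else 0) := by
        have : (2*n+1 - m) = (j : ℕ) := by omega
        simp [Amat, hk0, hm, this]
        have h5 : 2*n+1-(j:ℕ) ≠ 0 := by omega
        have h6 : 2*n+1-(2*n+1-(j:ℕ)) = j := by omega
        simp [h5, h6]
      rw [hAk0j, hAik0]
      by_cases hij : (i : ℕ) = (j : ℕ)
      · have hij' : i = j := by ext; simpa using hij
        simp only [hij, if_pos rfl, Matrix.one_apply, hij', if_pos rfl]
        have hk0v : (k0 : ℕ) = m := rfl
        by_cases hjn : (j : ℕ) ≤ n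
        · have h1 : ¬ m ≤ n := by omega
          have h2 : d j = -1 := by
            simp only [hd]; rw [if_pos ⟨hjn, Or.inr (by omega)⟩]
          have h3 : d k0 = 1 := by
            simp only [hd]; rw [if_neg]; intro h; omega
          simp [h1, hjn, h2, h3]
        · have h1 : m ≤ n := by omega
          have h2 : d j = 1 := by
            simp only [hd]; rw [if_neg]; intro h; omega
          have h3 : d k0 = -1 := by
            simp only [hd]; rw [if_pos ⟨by omega, Or.inr (by omega : (k0:ℕ) ≠ 0)⟩]
          simp [h1, hjn, h2, h3]
      · have hij' : i ≠ j := fun h => hij (by rw [h])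
        simp [hij, Matrix.one_apply, hij']
    · intro k _ hk
      have hk' : (k : ℕ) ≠ m := fun h => hk (by ext; simpa using h)
      simp [Amat, hj, hm, hk']
      intro h; exact absurd (h.trans hm.symm) hk'
    · simp

/-- The key conjugation identity `c a c = a⁻¹` holds in `G_{2n+1}`. -/
theorem conj_a_by_c (n : ℕ) (hn : 0 < n)
    (a c : Matrix.SpecialLinearGroup (Fin (2*n+1)) ℤ)
    (ha : (a : Matrix (Fin (2*n+1)) (Fin (2*n+1)) ℤ) = Amat n)
    (hc : (c : Matrix (Fin (2*n+1)) (Fin (2*n+1)) ℤ) = Cmat n) :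
    c * a * c = a⁻¹ := by
  have h1 : (c * a * c) * a = 1 := by
    apply Subtype.ext
    simp only [Matrix.SpecialLinearGroup.coe_mul, Matrix.SpecialLinearGroup.coe_one, ha, hc]
    exact key n hn
  exact eq_inv_of_mul_eq_one_left h1
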